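/- Let ℓ > 0, let n be a positive integer, set k_n = 4πn/(3ℓ), and define f_n : ℝ² → ℝ by f_n(x,y) = sin(k_n(x + ℓ/2)) + 2(-1)^{n+1} sin((k_n/2)(x + ℓ/2)) cos((√3 k_n/2) y). Let R be the rotation of ℝ² by 120° counterclockwise about the origin and M the reflection M(x,y) = (x,-y). Then f_n(R v) = f_n(v) and f_n(M v) = f_n(v) for every v ∈ ℝ². (The ground state and its harmonics belong to symmetry class A1: they are symmetric under rotation and under reflection.) -/

import Mathlib

open Real

/-- The ground state solution and its harmonics are in symmetry class A1: they
are invariant under the rotation by 120° and under reflection in the x-axis. -/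
theorem ground_state_symmetry_A1
    (ℓ : ℝ) (hℓ : 0 < ℓ) (n : ℕ) (hn : 0 < n)
    (kn : ℝ) (hkn : kn = 4 * Real.pi * n / (3 * ℓ))
    (f : ℝ × ℝ → ℝ)
    (hf : ∀ x y : ℝ, f (x, y) =
      Real.sin (kn * (x + ℓ / 2)) +
        2 * (-1 : ℝ) ^ (n + 1) * Real.sin ((kn / 2) * (x + ℓ / 2)) *
          Real.cos ((Real.sqrt 3 * kn / 2) * y))
    (R : ℝ × ℝ → ℝ × ℝ)
    (hR : ∀ v : ℝ × ℝ, R v = (-(1 / 2) * v.1 - (Real.sqrt 3 / 2) * v.2,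
                               (Real.sqrt 3 / 2) * v.1 - (1 / 2) * v.2))
    (M : ℝ × ℝ → ℝ × ℝ) (hM : ∀ v : ℝ × ℝ, M v = (v.1, -v.2)) :
    (∀ v : ℝ × ℝ, f (R v) = f v) ∧ (∀ v : ℝ × ℝ, f (M v) = f v) := by
  have hball : kn * ℓ = 4 * Real.pi * n / 3 := by
    rw [hkn]; field_simp
  have h3 : Real.sqrt 3 * Real.sqrt 3 = 3 := Real.mul_self_sqrt (by norm_num)
  have hsin : ∀ t : ℝ, Real.sin ((n : ℝ) * Real.pi - t) = (-1 : ℝ) ^ (n + 1) * Real.sin t := by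
    intro t
    rw [Real.sin_nat_mul_pi_sub, pow_succ]
    ring
  have hε : ((-1 : ℝ) ^ (n + 1)) * ((-1 : ℝ) ^ (n + 1)) = 1 := by
    rw [← pow_add]
    exact Even.neg_one_pow ⟨n + 1, rfl⟩
  constructor
  · rintro ⟨x, y⟩
    rw [hR]
    simp only
    rw [hf, hf]
    set θ := kn / 2 * (x + ℓ / 2) with hθ
    set φ := Real.sqrt 3 * kn / 2 * y with hφ
    have e0 : kn * (x + ℓ / 2) = 2 * θ := by rw [hθ]; ring
    have e1 : kn * ((-(1 / 2) * x - Real.sqrt 3 / 2 * y) + ℓ / 2)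
        = (n : ℝ) * Real.pi - (θ + φ) := by
      rw [hθ, hφ]; linear_combination (3 / 4 : ℝ) * hball
    have e2 : kn / 2 * ((-(1 / 2) * x - Real.sqrt 3 / 2 * y) + ℓ / 2)
        = ((n : ℝ) * Real.pi - (θ + φ)) / 2 := by
      rw [hθ, hφ]; linear_combination (3 / 8 : ℝ) * hball
    have e3 : Real.sqrt 3 * kn / 2 * (Real.sqrt 3 / 2 * x - 1 / 2 * y)
        = (3 * θ - φ) / 2 - (n : ℝ) * Real.pi / 2 := by
      rw [hθ, hφ]; linear_combination (kn * x / 4) * h3 - (3 / 8 : ℝ) * hball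
    rw [e0, e1, e2, e3]
    set A := ((n : ℝ) * Real.pi - (θ + φ)) / 2 with hA
    set B := (3 * θ - φ) / 2 - (n : ℝ) * Real.pi / 2 with hB
    have h1 : Real.sin ((n : ℝ) * Real.pi - (θ + φ))
        = (-1 : ℝ) ^ (n + 1) * Real.sin (θ + φ) := hsin _
    have h2 : 2 * Real.sin A * Real.cos B
        = Real.sin (θ - φ) + (-1 : ℝ) ^ (n + 1) * Real.sin (2 * θ) := by
      have hAB : A + B = θ - φ := by rw [hA, hB]; ring
      have hAB2 : A - B = (n : ℝ) * Real.pi - 2 * θ := by rw [hA, hB]; ring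
      have hs := Real.sin_add A B
      have hs2 := Real.sin_sub A B
      rw [hAB] at hs
      rw [hAB2, hsin] at hs2
      linarith [hs, hs2]
    have h3s : Real.sin (θ + φ) = Real.sin θ * Real.cos φ + Real.cos θ * Real.sin φ :=
      Real.sin_add θ φ
    have h4s : Real.sin (θ - φ) = Real.sin θ * Real.cos φ - Real.cos θ * Real.sin φ :=
      Real.sin_sub θ φ
    linear_combination h1 + (-1 : ℝ) ^ (n + 1) * h2 + (-1 : ℝ) ^ (n + 1) * h3s
      + (-1 : ℝ) ^ (n + 1) * h4s + Real.sin (2 * θ) * hε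
  · rintro ⟨x, y⟩
    rw [hM]
    simp only
    rw [hf, hf, mul_neg, Real.cos_neg]
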